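/- Let n ≥ 2 and let 𝓛 = {L_1,…,L_k} be a lumping of the Insect Markov chain on X^n. For each part L_i, let L_i' = {(x_1,…,x_{n−1}) : (x_1,…,x_n) ∈ L_i} ⊆ X^{n−1}. Then the distinct sets among L_1',…,L_k' form a partition 𝓛' of X^{n−1}, and 𝓛' is a lumping of the Insect Markov chain on X^{n−1}. -/

import Mathlib

open scoped Classical

/-- The ultrametric distance on `X^n`:
`d(x,y) = n − max{m ∈ {0,…,n} : x 0 = y 0, …, x (m-1) = y (m-1)}`. -/
noncomputable def treeDist {X : Type*} {n : ℕ} (x y : Fin n → X) : ℕ :=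
  n - ((Finset.range (n + 1)).filter
        (fun m => ∀ i : Fin n, (i : ℕ) < m → x i = y i)).sup id

/-- The coefficients of the Insect Markov chain on the `q`-ary rooted tree of depth `n`:
`α_0 = 1`, `α_j = (q^j − 1)/(q^{j+1} − 1)` for `1 ≤ j ≤ n−1`, and `α_n = 0`. -/
noncomputable def insectAlpha (q n : ℕ) (j : ℕ) : ℝ :=
  if j = 0 then 1
  else if j ≤ n - 1 then ((q : ℝ) ^ j - 1) / ((q : ℝ) ^ (j + 1) - 1)
  else 0

/-- The transition probabilities of the Insect Markov chain on `X^n` (`q = |X|`):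
`p(x,y) = ∑_{i = max(d(x,y),1)}^{n} q^{−i} · α_1⋯α_{i−1} · (1 − α_i)`. -/
noncomputable def insectP {X : Type*} [Fintype X] {n : ℕ} (x y : Fin n → X) : ℝ :=
  ∑ i ∈ Finset.Icc (max (treeDist x y) 1) n,
    (1 / (Fintype.card X : ℝ) ^ i)
      * (∏ t ∈ Finset.Ico 1 i, insectAlpha (Fintype.card X) n t)
      * (1 - insectAlpha (Fintype.card X) n i)

lemma treeDist_le_iff {X : Type*} {N : ℕ} (x y : Fin N → X) (σ : ℕ) :
    treeDist x y ≤ σ ↔ ∀ i : Fin N, (i : ℕ) + σ < N → x i = y i := by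
  set F := (Finset.range (N + 1)).filter
      (fun m => ∀ i : Fin N, (i : ℕ) < m → x i = y i) with hF
  have hne : F.Nonempty := ⟨0, by simp [hF]⟩
  obtain ⟨b, hbF, hb⟩ := Finset.exists_mem_eq_sup F hne id
  have hd : treeDist x y = N - b := by rw [treeDist, ← hF, hb]; rfl
  have hbmem := hbF
  rw [hF, Finset.mem_filter, Finset.mem_range] at hbmem
  constructor
  · intro h i hi
    rw [hd] at h
    exact hbmem.2 i (by omega)
  · intro h
    have hmem : N - σ ∈ F := by
      rw [hF, Finset.mem_filter, Finset.mem_range]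
      refine ⟨by omega, fun i hi => h i (by omega)⟩
    have h2 : N - σ ≤ F.sup id := Finset.le_sup (f := id) hmem
    rw [hb] at h2
    rw [hd]
    simp only [id] at h2
    omega

lemma treeDist_le_zero_iff {X : Type*} {N : ℕ} (x y : Fin N → X) :
    treeDist x y ≤ 0 ↔ x = y := by
  rw [treeDist_le_iff]
  constructor
  · intro h; funext i; exact h i (by omega)
  · intro h; subst h; intro i _; rfl

lemma card_ball {X : Type*} [Fintype X] {N : ℕ} (x : Fin N → X) {σ : ℕ} (hσ : σ ≤ N) :
    (Finset.univ.filter (fun y => treeDist x y ≤ σ)).card = Fintype.card X ^ σ := by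
  have key : (Finset.univ.filter (fun y => treeDist x y ≤ σ)).card
      = (Finset.univ : Finset (Fin σ → X)).card := by
    refine Finset.card_nbij' (i := fun y => fun b : Fin σ => y ⟨N - σ + (b : ℕ), by omega⟩)
      (j := fun g => fun a : Fin N =>
        if h : (a : ℕ) + σ < N then x a else g ⟨(a : ℕ) - (N - σ), by omega⟩)
      ?_ ?_ ?_ ?_
    · intro y hy
      exact Finset.mem_univ _
    · intro g hg
      rw [Finset.mem_coe, Finset.mem_filter]
      refine ⟨Finset.mem_univ _, ?_⟩
      rw [treeDist_le_iff]
      intro i hi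
      simp [dif_pos hi]
    · intro y hy
      rw [Finset.mem_coe, Finset.mem_filter, treeDist_le_iff] at hy
      funext a
      dsimp only
      by_cases h : (a : ℕ) + σ < N
      · rw [dif_pos h]; exact hy.2 a h
      · rw [dif_neg h]
        congr 1
        apply Fin.ext
        simp only
        omega
    · intro g hg
      funext b
      dsimp only
      have h : ¬ ((N - σ + (b : ℕ)) + σ < N) := by omega
      rw [dif_neg h]
      congr 1
      apply Fin.ext
      simp only
      omega
  rw [key]
  simp [Finset.card_univ]

lemma treeDist_symm_le {X : Type*} {N : ℕ} (x y : Fin N → X) (σ : ℕ) :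
    treeDist x y ≤ σ ↔ treeDist y x ≤ σ := by
  rw [treeDist_le_iff, treeDist_le_iff]
  exact ⟨fun h i hi => (h i hi).symm, fun h i hi => (h i hi).symm⟩

lemma count_pair {X : Type*} [Fintype X] {N : ℕ} (x z : Fin N → X) {a b : ℕ}
    (ha : a ≤ N) (hb : b ≤ N) :
    (Finset.univ.filter (fun y => treeDist x y ≤ a ∧ treeDist y z ≤ b)).card
      = if treeDist x z ≤ max a b then Fintype.card X ^ (min a b) else 0 := by
  rcases le_total a b with hab | hba
  · rw [max_eq_right hab, min_eq_left hab]
    by_cases h : treeDist x z ≤ b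
    · rw [if_pos h]
      have hfil : (Finset.univ.filter (fun y => treeDist x y ≤ a ∧ treeDist y z ≤ b))
          = Finset.univ.filter (fun y => treeDist x y ≤ a) := by
        apply Finset.filter_congr
        intro y _
        rw [and_iff_left_iff_imp]
        intro hxy
        rw [treeDist_le_iff] at *
        intro i hi
        rw [← hxy i (by omega)]
        exact h i hi
      rw [hfil, card_ball x (le_trans hab hb)]
    · rw [if_neg h]
      rw [Finset.card_eq_zero, Finset.filter_eq_empty_iff]
      intro y _
      rintro ⟨h1, h2⟩
      apply h
      rw [treeDist_le_iff] at *
      intro i hi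
      rw [h1 i (by omega)]
      exact h2 i hi
  · rw [max_eq_left hba, min_eq_right hba]
    by_cases h : treeDist x z ≤ a
    · rw [if_pos h]
      have hfil : (Finset.univ.filter (fun y => treeDist x y ≤ a ∧ treeDist y z ≤ b))
          = Finset.univ.filter (fun y => treeDist z y ≤ b) := by
        apply Finset.filter_congr
        intro y _
        constructor
        · rintro ⟨_, h2⟩; rw [← treeDist_symm_le]; exact h2
        · intro hzy
          rw [treeDist_symm_le] at hzy
          refine ⟨?_, hzy⟩
          rw [treeDist_le_iff] at *
          intro i hi
          rw [h i hi, ← hzy i (by omega)]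
      rw [hfil, card_ball z (le_trans hba ha)]
    · rw [if_neg h]
      rw [Finset.card_eq_zero, Finset.filter_eq_empty_iff]
      intro y _
      rintro ⟨h1, h2⟩
      apply h
      rw [treeDist_le_iff] at *
      intro i hi
      rw [h1 i hi]
      exact h2 i (by omega)

noncomputable def ballSum {X : Type*} [Fintype X] {N : ℕ} (σ : ℕ)
    (g : (Fin N → X) → ℝ) (x : Fin N → X) : ℝ :=
  ∑ y ∈ Finset.univ.filter (fun y => treeDist x y ≤ σ), g y

lemma ballSum_comp {X : Type*} [Fintype X] {N : ℕ} {a b : ℕ} (ha : a ≤ N) (hb : b ≤ N)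
    (g : (Fin N → X) → ℝ) (x : Fin N → X) :
    ballSum a (ballSum b g) x
      = (Fintype.card X ^ (min a b) : ℝ) * ballSum (max a b) g x := by
  unfold ballSum
  rw [Finset.sum_filter]
  calc
    (∑ y : Fin N → X, if treeDist x y ≤ a then
        ∑ z ∈ Finset.univ.filter (fun z => treeDist y z ≤ b), g z else 0)
      = ∑ y : Fin N → X, ∑ z : Fin N → X,
          if treeDist x y ≤ a ∧ treeDist y z ≤ b then g z else 0 := by
        apply Finset.sum_congr rfl
        intro y _
        by_cases h : treeDist x y ≤ a
        · rw [if_pos h, Finset.sum_filter]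
          apply Finset.sum_congr rfl
          intro z _
          simp [h]
        · rw [if_neg h]
          symm
          apply Finset.sum_eq_zero
          intro z _
          simp [h]
    _ = ∑ z : Fin N → X, ∑ y : Fin N → X,
          if treeDist x y ≤ a ∧ treeDist y z ≤ b then g z else 0 := Finset.sum_comm
    _ = ∑ z : Fin N → X,
          ((Finset.univ.filter (fun y => treeDist x y ≤ a ∧ treeDist y z ≤ b)).card : ℝ) * g z := by
        apply Finset.sum_congr rfl
        intro z _
        rw [← Finset.sum_filter, Finset.sum_const, nsmul_eq_mul]
    _ = ∑ z : Fin N → X,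
          (if treeDist x z ≤ max a b then (Fintype.card X ^ (min a b) : ℝ) else 0) * g z := by
        apply Finset.sum_congr rfl
        intro z _
        rw [count_pair x z ha hb]
        split_ifs <;> simp
    _ = (Fintype.card X ^ (min a b) : ℝ)
          * ∑ z ∈ Finset.univ.filter (fun z => treeDist x z ≤ max a b), g z := by
        rw [Finset.mul_sum, Finset.sum_filter]
        apply Finset.sum_congr rfl
        intro z _
        split_ifs <;> simp

lemma ballSum_add {X : Type*} [Fintype X] {N : ℕ} (σ : ℕ) (g h : (Fin N → X) → ℝ) :
    ballSum σ (fun y => g y + h y) = fun x => ballSum σ g x + ballSum σ h x := by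
  funext x; unfold ballSum; rw [← Finset.sum_add_distrib]

lemma ballSum_smul {X : Type*} [Fintype X] {N : ℕ} (σ : ℕ) (c : ℝ) (g : (Fin N → X) → ℝ) :
    ballSum σ (fun y => c * g y) = fun x => c * ballSum σ g x := by
  funext x; unfold ballSum; rw [Finset.mul_sum]

lemma ballSum_sub {X : Type*} [Fintype X] {N : ℕ} (σ : ℕ) (g h : (Fin N → X) → ℝ) :
    ballSum σ (fun y => g y - h y) = fun x => ballSum σ g x - ballSum σ h x := by
  funext x; unfold ballSum; rw [Finset.sum_sub_distrib]

noncomputable def cfn (q N i : ℕ) : ℝ :=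
  (1 / (q : ℝ) ^ i) * (∏ t ∈ Finset.Ico 1 i, insectAlpha q N t) * (1 - insectAlpha q N i)

lemma insectAlpha_pos {q N t : ℕ} (hq : 2 ≤ q) (ht1 : 1 ≤ t) (ht2 : t ≤ N - 1) :
    0 < insectAlpha q N t := by
  have hq1 : (1 : ℝ) < (q : ℝ) := by exact_mod_cast hq.trans_lt' one_lt_two
  rw [insectAlpha, if_neg (by omega), if_pos ht2]
  apply div_pos
  · have : (1:ℝ) < (q:ℝ) ^ t := one_lt_pow₀ hq1 (by omega)
    linarith
  · have : (1:ℝ) < (q:ℝ) ^ (t+1) := one_lt_pow₀ hq1 (by omega)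
    linarith

lemma insectAlpha_lt_one {q N t : ℕ} (hq : 2 ≤ q) (ht1 : 1 ≤ t) :
    insectAlpha q N t < 1 := by
  have hq1 : (1 : ℝ) < (q : ℝ) := by exact_mod_cast hq.trans_lt' one_lt_two
  rw [insectAlpha, if_neg (by omega)]
  split_ifs with h
  · rw [div_lt_one]
    · have : (q:ℝ) ^ t < (q:ℝ) ^ (t+1) := by
        apply pow_lt_pow_right₀ hq1 (by omega)
      linarith
    · have : (1:ℝ) < (q:ℝ) ^ (t+1) := one_lt_pow₀ hq1 (by omega)
      linarith
  · norm_num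

lemma cfn_pos {q N i : ℕ} (hq : 2 ≤ q) (h1 : 1 ≤ i) (h2 : i ≤ N) : 0 < cfn q N i := by
  have hq0 : (0:ℝ) < (q:ℝ) := by positivity
  unfold cfn
  apply mul_pos
  apply mul_pos
  · positivity
  · apply Finset.prod_pos
    intro t ht
    rw [Finset.mem_Ico] at ht
    exact insectAlpha_pos hq ht.1 (by omega)
  · have := insectAlpha_lt_one (N := N) (t := i) hq h1
    linarith

lemma insectP_eq {X : Type*} [Fintype X] {N : ℕ} (x y : Fin N → X) :
    insectP x y = ∑ i ∈ Finset.Icc 1 N,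
      (if treeDist x y ≤ i then cfn (Fintype.card X) N i else 0) := by
  rw [insectP]
  have hicc : Finset.Icc (max (treeDist x y) 1) N
      = (Finset.Icc 1 N).filter (fun i => treeDist x y ≤ i) := by
    ext i
    simp only [Finset.mem_Icc, Finset.mem_filter]
    omega
  rw [hicc, Finset.sum_filter]
  rfl

noncomputable def mop {X : Type*} [Fintype X] {N : ℕ}
    (g : (Fin N → X) → ℝ) (x : Fin N → X) : ℝ := ∑ y, insectP x y * g y

lemma mop_eq_sum {X : Type*} [Fintype X] {N : ℕ} (g : (Fin N → X) → ℝ) :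
    mop g = fun x => ∑ i ∈ Finset.Icc 1 N, cfn (Fintype.card X) N i * ballSum i g x := by
  funext x
  unfold mop
  calc
    ∑ y, insectP x y * g y
      = ∑ y, ∑ i ∈ Finset.Icc 1 N,
          (if treeDist x y ≤ i then cfn (Fintype.card X) N i * g y else 0) := by
        apply Finset.sum_congr rfl
        intro y _
        rw [insectP_eq, Finset.sum_mul]
        apply Finset.sum_congr rfl
        intro i _
        split_ifs <;> simp
    _ = ∑ i ∈ Finset.Icc 1 N, ∑ y,
          (if treeDist x y ≤ i then cfn (Fintype.card X) N i * g y else 0) := Finset.sum_comm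
    _ = ∑ i ∈ Finset.Icc 1 N, cfn (Fintype.card X) N i * ballSum i g x := by
        apply Finset.sum_congr rfl
        intro i _
        rw [← Finset.sum_filter]
        unfold ballSum
        rw [Finset.mul_sum]

noncomputable def tfun {X : Type*} [Fintype X] {N : ℕ} (τ : ℕ)
    (g : (Fin N → X) → ℝ) (x : Fin N → X) : ℝ :=
  (1 / (Fintype.card X : ℝ) ^ τ) * ballSum τ g x
    - (if τ = N then 0 else (1 / (Fintype.card X : ℝ) ^ (τ+1)) * ballSum (τ+1) g x)

noncomputable def muv (q N τ : ℕ) : ℝ := ∑ i ∈ Finset.Icc 1 τ, cfn q N i * (q : ℝ) ^ i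

section Eigen
variable {X : Type*} [Fintype X] {N : ℕ}

-- telescoping
lemma tfun_telescope (g : (Fin N → X) → ℝ) :
    ∀ m σ, σ + m = N → 1 ≤ σ →
      ∑ τ ∈ Finset.Icc σ N, (fun x => tfun τ g x)
        = fun x => (1 / (Fintype.card X : ℝ) ^ σ) * ballSum σ g x := by
  intro m
  induction m with
  | zero =>
      intro σ hσ h1
      have : σ = N := by omega
      subst this
      rw [Finset.Icc_self, Finset.sum_singleton]
      funext x
      rw [tfun, if_pos rfl]
      ring
  | succ m ih =>
      intro σ hσ h1
      have hins : Finset.Icc σ N = insert σ (Finset.Icc (σ+1) N) := by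
        ext i
        simp only [Finset.mem_Icc, Finset.mem_insert]
        omega
      rw [hins, Finset.sum_insert (by simp)]
      rw [ih (σ+1) (by omega) (by omega)]
      funext x
      simp only [Pi.add_apply]
      rw [tfun, if_neg (by omega)]
      ring

-- ballSum of tfun
lemma ballSum_tfun (hq : 2 ≤ Fintype.card X) (g : (Fin N → X) → ℝ) {i τ : ℕ}
    (hi1 : 1 ≤ i) (hiN : i ≤ N) (hτ1 : 1 ≤ τ) (hτN : τ ≤ N) :
    ballSum i (tfun τ g) = fun x =>
      if i ≤ τ then ((Fintype.card X : ℝ) ^ i) * tfun τ g x else 0 := by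
  have hcard : 0 < Fintype.card X := by omega
  have hq0 : (0:ℝ) < (Fintype.card X : ℝ) ^ (τ+1) := by positivity
  by_cases hτeq : τ = N
  · have hTg : tfun τ g = fun y => (1 / (Fintype.card X : ℝ) ^ τ) * ballSum τ g y := by
      funext y; rw [tfun, if_pos hτeq]; ring
    rw [hTg]
    funext x
    rw [ballSum_smul i _ (ballSum τ g)]
    dsimp only
    rw [ballSum_comp hiN hτN g x]
    have hiτ : i ≤ τ := by omega
    rw [if_pos hiτ]
    rw [min_eq_left hiτ, max_eq_right hiτ]
    ring
  · have hτN' : τ + 1 ≤ N := by omega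
    have hTg : tfun τ g = fun y => (1 / (Fintype.card X : ℝ) ^ τ) * ballSum τ g y
        - (1 / (Fintype.card X : ℝ) ^ (τ+1)) * ballSum (τ+1) g y := by
      funext y; rw [tfun, if_neg hτeq]
    rw [hTg]
    funext x
    rw [ballSum_sub i]
    dsimp only
    rw [ballSum_smul i _ (ballSum τ g), ballSum_smul i _ (ballSum (τ+1) g)]
    dsimp only
    rw [ballSum_comp hiN hτN g x, ballSum_comp hiN hτN' g x]
    by_cases h : i ≤ τ
    · rw [if_pos h]
      rw [min_eq_left h, max_eq_right h, min_eq_left (by omega : i ≤ τ+1),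
        max_eq_right (by omega : i ≤ τ+1)]
      ring
    · rw [if_neg h]
      rw [min_eq_right (by omega : τ ≤ i), max_eq_left (by omega : τ ≤ i),
        min_eq_right (by omega : τ+1 ≤ i), max_eq_left (by omega : τ+1 ≤ i)]
      have h1 : (1 / (Fintype.card X : ℝ) ^ τ) * ((Fintype.card X : ℝ) ^ τ * ballSum i g x)
          = ballSum i g x := by field_simp
      have h2 : (1 / (Fintype.card X : ℝ) ^ (τ+1))
            * ((Fintype.card X : ℝ) ^ (τ+1) * ballSum i g x) = ballSum i g x := by field_simp
      rw [h1, h2]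
      ring

lemma mop_tfun (hq : 2 ≤ Fintype.card X) (g : (Fin N → X) → ℝ) {τ : ℕ}
    (hτ1 : 1 ≤ τ) (hτN : τ ≤ N) :
    mop (tfun τ g) = fun x => muv (Fintype.card X) N τ * tfun τ g x := by
  rw [mop_eq_sum]
  funext x
  have hstep : ∀ i ∈ Finset.Icc 1 N,
      cfn (Fintype.card X) N i * ballSum i (tfun τ g) x
        = (if i ≤ τ then cfn (Fintype.card X) N i * (Fintype.card X : ℝ) ^ i else 0)
            * tfun τ g x := by
    intro i hi
    rw [Finset.mem_Icc] at hi
    rw [ballSum_tfun hq g hi.1 hi.2 hτ1 hτN]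
    dsimp only
    split_ifs <;> ring
  rw [Finset.sum_congr rfl hstep]
  rw [← Finset.sum_mul]
  congr 1
  rw [← Finset.sum_filter]
  rw [muv]
  congr 1
  ext i
  simp only [Finset.mem_filter, Finset.mem_Icc]
  omega

lemma mop_one_ball (hq : 2 ≤ Fintype.card X) (hN : 1 ≤ N) (g : (Fin N → X) → ℝ) :
    mop g = mop (fun y => (1 / (Fintype.card X : ℝ) ^ 1) * ballSum 1 g y) := by
  have hcard : 0 < Fintype.card X := by omega
  rw [mop_eq_sum, mop_eq_sum]
  funext x
  apply Finset.sum_congr rfl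
  intro i hi
  rw [Finset.mem_Icc] at hi
  rw [ballSum_smul i _ (ballSum 1 g)]
  dsimp only
  rw [ballSum_comp hi.2 hN g x]
  rw [min_eq_right hi.1, max_eq_left hi.1]
  have : (1 / (Fintype.card X : ℝ) ^ 1) * ((Fintype.card X : ℝ) ^ 1 * ballSum i g x)
      = ballSum i g x := by field_simp
  rw [this]

lemma mop_decomp (hq : 2 ≤ Fintype.card X) (hN : 1 ≤ N) (g : (Fin N → X) → ℝ) :
    mop g = fun x => ∑ τ ∈ Finset.Icc 1 N, muv (Fintype.card X) N τ * tfun τ g x := by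
  have htel := tfun_telescope g (N - 1) 1 (by omega) le_rfl
  have hmg : mop g = mop (∑ τ ∈ Finset.Icc 1 N, (fun x => tfun τ g x)) := by
    rw [htel]
    exact mop_one_ball hq hN g
  rw [hmg]
  have hlin : mop (∑ τ ∈ Finset.Icc 1 N, (fun x => tfun τ g x))
      = fun x => ∑ τ ∈ Finset.Icc 1 N, mop (tfun τ g) x := by
    funext x
    unfold mop
    rw [Finset.sum_comm]
    apply Finset.sum_congr rfl
    intro y _
    rw [Finset.sum_apply, Finset.mul_sum]
  rw [hlin]
  funext x
  apply Finset.sum_congr rfl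
  intro τ hτ
  rw [Finset.mem_Icc] at hτ
  rw [mop_tfun hq g hτ.1 hτ.2]

lemma muv_strictmono (hq : 2 ≤ Fintype.card X) {σ τ : ℕ} (hσ : σ < τ) (hτN : τ ≤ N) :
    muv (Fintype.card X) N σ < muv (Fintype.card X) N τ := by
  have key : ∀ a b : ℕ, a ≤ b → b ≤ N → muv (Fintype.card X) N b
      = muv (Fintype.card X) N a
        + ∑ i ∈ Finset.Ioc a b, cfn (Fintype.card X) N i * (Fintype.card X : ℝ) ^ i := by
    intro a b hab hbN
    unfold muv
    have h1 : Finset.Icc 1 b = Finset.Icc 1 a ∪ Finset.Ioc a b := by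
      ext i; simp only [Finset.mem_union, Finset.mem_Icc, Finset.mem_Ioc]; omega
    rw [h1, Finset.sum_union]
    rw [Finset.disjoint_left]
    intro i h1 h2
    simp only [Finset.mem_Icc] at h1
    simp only [Finset.mem_Ioc] at h2
    omega
  rw [key σ τ (by omega) hτN]
  have hpos : 0 < ∑ i ∈ Finset.Ioc σ τ, cfn (Fintype.card X) N i * (Fintype.card X : ℝ) ^ i := by
    apply Finset.sum_pos
    · intro i hi
      rw [Finset.mem_Ioc] at hi
      have hc := cfn_pos hq (by omega : 1 ≤ i) (by omega : i ≤ N)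
      have : (0:ℝ) < (Fintype.card X : ℝ) ^ i := by
        have : 0 < Fintype.card X := by omega
        positivity
      exact mul_pos hc this
    · exact ⟨τ, by rw [Finset.mem_Ioc]; omega⟩
  linarith

lemma muv_pos (hq : 2 ≤ Fintype.card X) {τ : ℕ} (hτ1 : 1 ≤ τ) (hτN : τ ≤ N) :
    0 < muv (Fintype.card X) N τ := by
  unfold muv
  apply Finset.sum_pos
  · intro i hi
    rw [Finset.mem_Icc] at hi
    have hc := cfn_pos hq hi.1 (by omega : i ≤ N)
    have : (0:ℝ) < (Fintype.card X : ℝ) ^ i := by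
      have : 0 < Fintype.card X := by omega
      positivity
    exact mul_pos hc this
  · exact ⟨1, by rw [Finset.mem_Icc]; omega⟩

end Eigen

section Lump
variable {X : Type*} [Fintype X] {N k : ℕ}

noncomputable def indL (L : Fin k → Finset (Fin N → X)) (s : Fin k) :
    (Fin N → X) → ℝ := fun x => if x ∈ L s then 1 else 0

def isL (L : Fin k → Finset (Fin N → X)) (f : (Fin N → X) → ℝ) : Prop :=
  ∃ a : Fin k → ℝ, f = fun x => ∑ s, a s * indL L s x

lemma isL_indL (L : Fin k → Finset (Fin N → X)) (s : Fin k) : isL L (indL L s) := by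
  refine ⟨fun t => if t = s then 1 else 0, ?_⟩
  funext x
  rw [Finset.sum_eq_single s]
  · simp
  · intro t _ hts
    dsimp only
    rw [if_neg hts, zero_mul]
  · intro h
    exact absurd (Finset.mem_univ s) h

lemma isL_sum {ι : Type*} (L : Fin k → Finset (Fin N → X)) (s : Finset ι)
    (F : ι → ((Fin N → X) → ℝ)) (c : ι → ℝ) (h : ∀ t ∈ s, isL L (F t)) :
    isL L (fun x => ∑ t ∈ s, c t * F t x) := by
  classical
  induction s using Finset.induction_on with
  | empty => exact ⟨0, by funext x; simp⟩
  | insert a s' hnotmem ih =>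
      obtain ⟨b, hb⟩ := h a (Finset.mem_insert_self a s')
      obtain ⟨d, hd⟩ := ih (fun t ht => h t (Finset.mem_insert_of_mem ht))
      refine ⟨fun r => c a * b r + d r, ?_⟩
      funext x
      rw [Finset.sum_insert hnotmem]
      have hFa : F a x = ∑ r, b r * indL L r x := by rw [hb]
      have hrest : (∑ t ∈ s', c t * F t x) = ∑ r, d r * indL L r x := by
        have := congrFun hd x
        simpa using this
      rw [hFa, hrest, Finset.mul_sum, ← Finset.sum_add_distrib]
      apply Finset.sum_congr rfl
      intro r _
      ring

variable (L : Fin k → Finset (Fin N → X))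
variable (hL_nonempty : ∀ s, (L s).Nonempty)
variable (hL_part : ∀ x : Fin N → X, ∃! s, x ∈ L s)
variable (hlump : ∀ r s : Fin k, ∀ x ∈ L r, ∀ x' ∈ L r,
    ∑ y ∈ L s, insectP x y = ∑ y ∈ L s, insectP x' y)

include hL_nonempty hL_part hlump in
lemma isL_mop_indL (s : Fin k) : isL L (mop (indL L s)) := by
  classical
  refine ⟨fun r => ∑ y ∈ L s, insectP (hL_nonempty r).choose y, ?_⟩
  funext x
  obtain ⟨r0, hr0, huniq⟩ := hL_part x
  have hLHS : mop (indL L s) x = ∑ y ∈ L s, insectP x y := by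
    unfold mop indL
    rw [Finset.sum_congr rfl (fun y _ => mul_ite (y ∈ L s) (insectP x y) 1 0)]
    simp only [mul_one, mul_zero]
    rw [← Finset.sum_filter, Finset.filter_univ_mem]
  rw [hLHS]
  rw [Finset.sum_eq_single r0]
  · rw [indL, if_pos hr0, mul_one]
    exact hlump r0 s x hr0 (hL_nonempty r0).choose (hL_nonempty r0).choose_spec
  · intro t _ hts
    rw [indL]
    rw [if_neg (fun hmem => hts (huniq t hmem)), mul_zero]
  · intro h
    exact absurd (Finset.mem_univ r0) h

include hL_nonempty hL_part hlump in
lemma isL_mop {f : (Fin N → X) → ℝ} (hf : isL L f) : isL L (mop f) := by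
  obtain ⟨a, ha⟩ := hf
  have : mop f = fun x => ∑ s, a s * mop (indL L s) x := by
    funext x
    rw [ha]
    unfold mop
    dsimp only
    calc ∑ y : Fin N → X, insectP x y * ∑ s : Fin k, a s * indL L s y
        = ∑ y : Fin N → X, ∑ s : Fin k, a s * (insectP x y * indL L s y) := by
          apply Finset.sum_congr rfl
          intro y _
          rw [Finset.mul_sum]
          apply Finset.sum_congr rfl
          intro t _
          ring
      _ = ∑ s : Fin k, ∑ y : Fin N → X, a s * (insectP x y * indL L s y) := Finset.sum_comm
      _ = ∑ s, a s * ∑ y, insectP x y * indL L s y := by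
          apply Finset.sum_congr rfl
          intro t _
          rw [Finset.mul_sum]
  rw [this]
  exact isL_sum L Finset.univ _ a (fun t _ => isL_mop_indL L hL_nonempty hL_part hlump t)

end Lump

section Main
variable {X : Type*} [Fintype X] {N k : ℕ}
variable (L : Fin k → Finset (Fin N → X))
variable (hq : 2 ≤ Fintype.card X) (hN : 1 ≤ N)
variable (hL_nonempty : ∀ s, (L s).Nonempty)
variable (hL_part : ∀ x : Fin N → X, ∃! s, x ∈ L s)
variable (hlump : ∀ r s : Fin k, ∀ x ∈ L r, ∀ x' ∈ L r,
    ∑ y ∈ L s, insectP x y = ∑ y ∈ L s, insectP x' y)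

noncomputable def nodes (q N : ℕ) : ℕ → ℝ := fun τ => if τ = 0 then 0 else muv q N τ

include hq in
lemma nodes_injOn : Set.InjOn (nodes (Fintype.card X) N) (Finset.Icc 0 N : Finset ℕ) := by
  have hmono : ∀ a b : ℕ, a < b → b ≤ N →
      nodes (Fintype.card X) N a < nodes (Fintype.card X) N b := by
    intro a b hab hbN
    unfold nodes
    rcases Nat.eq_zero_or_pos a with ha | ha
    · subst ha
      rw [if_pos rfl, if_neg (by omega)]
      exact muv_pos hq (by omega) hbN
    · rw [if_neg (by omega), if_neg (by omega)]
      exact muv_strictmono hq hab hbN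
  intro a ha b hb hab
  simp only [Finset.coe_Icc, Set.mem_Icc] at ha hb
  by_contra hne
  rcases Nat.lt_or_ge a b with h | h
  · exact absurd hab (ne_of_lt (hmono a b h hb.2))
  · have : b < a := by omega
    exact absurd hab.symm (ne_of_lt (hmono b a this ha.2))

include hq hN hL_nonempty hL_part hlump in
lemma isL_iter (s : Fin k) : ∀ m : ℕ, isL L (mop^[m+1] (indL L s)) := by
  intro m
  induction m with
  | zero =>
      rw [Function.iterate_one]
      exact isL_mop_indL L hL_nonempty hL_part hlump s
  | succ m ih =>
      rw [Function.iterate_succ_apply']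
      exact isL_mop L hL_nonempty hL_part hlump ih

include hq hN in
lemma iter_decomp (s : Fin k) : ∀ m : ℕ, mop^[m+1] (indL L s)
    = fun x => ∑ τ ∈ Finset.Icc 1 N,
        (muv (Fintype.card X) N τ) ^ (m+1) * tfun τ (indL L s) x := by
  intro m
  induction m with
  | zero =>
      rw [Function.iterate_one]
      rw [mop_decomp hq hN (indL L s)]
      funext x
      apply Finset.sum_congr rfl
      intro τ _
      rw [pow_one]
  | succ m ih =>
      rw [Function.iterate_succ_apply', ih]
      have hlin : mop (fun x => ∑ τ ∈ Finset.Icc 1 N,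
            (muv (Fintype.card X) N τ) ^ (m+1) * tfun τ (indL L s) x)
          = fun x => ∑ τ ∈ Finset.Icc 1 N,
              (muv (Fintype.card X) N τ) ^ (m+1) * mop (tfun τ (indL L s)) x := by
        funext x
        unfold mop
        dsimp only
        calc ∑ y : Fin N → X, insectP x y * ∑ τ ∈ Finset.Icc 1 N,
                (muv (Fintype.card X) N τ) ^ (m+1) * tfun τ (indL L s) y
            = ∑ y : Fin N → X, ∑ τ ∈ Finset.Icc 1 N,
                (muv (Fintype.card X) N τ) ^ (m+1) * (insectP x y * tfun τ (indL L s) y) := by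
              apply Finset.sum_congr rfl
              intro y _
              rw [Finset.mul_sum]
              exact Finset.sum_congr rfl (fun τ _ => by ring)
          _ = ∑ τ ∈ Finset.Icc 1 N, ∑ y : Fin N → X,
                (muv (Fintype.card X) N τ) ^ (m+1) * (insectP x y * tfun τ (indL L s) y) :=
              Finset.sum_comm
          _ = ∑ τ ∈ Finset.Icc 1 N, (muv (Fintype.card X) N τ) ^ (m+1)
                * ∑ y, insectP x y * tfun τ (indL L s) y := by
              exact Finset.sum_congr rfl (fun τ _ => by rw [Finset.mul_sum])
      rw [hlin]
      funext x
      apply Finset.sum_congr rfl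
      intro τ hτ
      rw [Finset.mem_Icc] at hτ
      rw [mop_tfun hq (indL L s) hτ.1 hτ.2]
      dsimp only
      ring

include hq hN hL_nonempty hL_part hlump in
lemma isL_tfun (s : Fin k) {σ : ℕ} (hσ1 : 1 ≤ σ) (hσN : σ ≤ N) :
    isL L (tfun σ (indL L s)) := by
  classical
  set q := Fintype.card X with hqdef
  set p := Lagrange.basis (Finset.Icc 0 N) (nodes q N) σ with hp
  have hσmem : σ ∈ Finset.Icc 0 N := by rw [Finset.mem_Icc]; omega
  have hinj := nodes_injOn (N := N) hq
  have heval : ∀ τ ∈ Finset.Icc 1 N,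
      p.eval (nodes q N τ) = if τ = σ then 1 else 0 := by
    intro τ hτ
    rw [Finset.mem_Icc] at hτ
    by_cases h : τ = σ
    · subst h
      rw [if_pos rfl, hp]
      exact Lagrange.eval_basis_self hinj hσmem
    · rw [if_neg h, hp]
      exact Lagrange.eval_basis_of_ne (fun hc => h hc.symm)
        (by rw [Finset.mem_Icc]; omega)
  have hcoeff0 : p.coeff 0 = 0 := by
    rw [Polynomial.coeff_zero_eq_eval_zero]
    have h0 : nodes q N 0 = 0 := by rw [nodes, if_pos rfl]
    rw [← h0, hp]
    exact Lagrange.eval_basis_of_ne (by omega) (by rw [Finset.mem_Icc]; omega)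
  -- expand tfun σ as Lagrange combination of iterates
  have hrepr : tfun σ (indL L s) = fun x => ∑ m ∈ Finset.range p.natDegree,
      p.coeff (m+1) * mop^[m+1] (indL L s) x := by
    funext x
    have h1 : tfun σ (indL L s) x
        = ∑ τ ∈ Finset.Icc 1 N, (p.eval (nodes q N τ)) * tfun τ (indL L s) x := by
      rw [Finset.sum_congr rfl
        (fun τ hτ => by rw [heval τ hτ, ite_mul, one_mul, zero_mul])]
      rw [Finset.sum_ite_eq' (Finset.Icc 1 N) σ (fun τ => tfun τ (indL L s) x)]
      rw [if_pos (by rw [Finset.mem_Icc]; omega)]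
    rw [h1]
    have h2 : ∀ τ ∈ Finset.Icc 1 N, (p.eval (nodes q N τ)) * tfun τ (indL L s) x
        = ∑ m ∈ Finset.range (p.natDegree + 1),
            p.coeff m * ((nodes q N τ)^m * tfun τ (indL L s) x) := by
      intro τ _
      rw [Polynomial.eval_eq_sum_range, Finset.sum_mul]
      exact Finset.sum_congr rfl (fun m _ => by ring)
    rw [Finset.sum_congr rfl h2, Finset.sum_comm]
    rw [Finset.sum_range_succ']
    have hzero : p.coeff 0 * ((nodes q N 0)^0 * tfun 0 (indL L s) x) = 0 := by
      rw [hcoeff0]; ring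
    have hlast : (∑ τ ∈ Finset.Icc 1 N,
        p.coeff 0 * ((nodes q N τ)^0 * tfun τ (indL L s) x)) = 0 := by
      apply Finset.sum_eq_zero
      intro τ _
      rw [hcoeff0]; ring
    rw [hlast, add_zero]
    apply Finset.sum_congr rfl
    intro m _
    have := iter_decomp L hq hN s m
    rw [this]
    rw [Finset.mul_sum]
    apply Finset.sum_congr rfl
    intro τ hτ
    rw [Finset.mem_Icc] at hτ
    have : nodes q N τ = muv q N τ := by rw [nodes, if_neg (by omega)]
    rw [this]
  rw [hrepr]
  exact isL_sum L (Finset.range p.natDegree) _ _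
    (fun m _ => isL_iter L hq hN hL_nonempty hL_part hlump s m)

include hq hN hL_nonempty hL_part hlump in
lemma isL_ballSum (s : Fin k) {σ : ℕ} (hσ1 : 1 ≤ σ) (hσN : σ ≤ N) :
    isL L (ballSum σ (indL L s)) := by
  have htel := tfun_telescope (indL L s) (N - σ) σ (by omega) hσ1
  have hq0 : (Fintype.card X : ℝ) ^ σ ≠ 0 := by
    have : 0 < Fintype.card X := by omega
    positivity
  have hrepr : ballSum σ (indL L s) = fun x => ∑ τ ∈ Finset.Icc σ N,
      ((Fintype.card X : ℝ) ^ σ) * tfun τ (indL L s) x := by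
    funext x
    have := congrFun htel x
    rw [Finset.sum_apply] at this
    rw [← Finset.mul_sum, this]
    field_simp
  rw [hrepr]
  exact isL_sum L (Finset.Icc σ N) _ _
    (fun τ hτ => by
      rw [Finset.mem_Icc] at hτ
      exact isL_tfun L hq hN hL_nonempty hL_part hlump s (by omega) hτ.2)

include hL_part in
lemma isL_const_on_parts {f : (Fin N → X) → ℝ} (hf : isL L f)
    {r : Fin k} {x x' : Fin N → X} (hx : x ∈ L r) (hx' : x' ∈ L r) : f x = f x' := by
  obtain ⟨a, ha⟩ := hf
  rw [ha]
  apply Finset.sum_congr rfl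
  intro s _
  have hmem : ∀ z ∈ L r, ∀ t : Fin k, (z ∈ L t ↔ t = r) := by
    intro z hz t
    obtain ⟨u, hu, huu⟩ := hL_part z
    constructor
    · intro hzt
      exact (huu t hzt).trans (huu r hz).symm
    · intro h; subst h; exact hz
  unfold indL
  rw [if_congr (hmem x hx s) rfl rfl, if_congr (hmem x' hx' s) rfl rfl]

include hq hN hL_nonempty hL_part hlump in
lemma key_card {σ : ℕ} (hσ1 : 1 ≤ σ) (hσN : σ ≤ N) (r s : Fin k)
    {x x' : Fin N → X} (hx : x ∈ L r) (hx' : x' ∈ L r) :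
    ((L s).filter (fun y => treeDist x y ≤ σ)).card
      = ((L s).filter (fun y => treeDist x' y ≤ σ)).card := by
  have hball : ∀ z : Fin N → X, ballSum σ (indL L s) z
      = (((L s).filter (fun y => treeDist z y ≤ σ)).card : ℝ) := by
    intro z
    unfold ballSum indL
    rw [Finset.sum_boole]
    congr 2
    ext y
    simp only [Finset.mem_filter, Finset.mem_univ, true_and]
    tauto
  have := isL_const_on_parts L hL_part
    (isL_ballSum L hq hN hL_nonempty hL_part hlump s hσ1 hσN) hx hx'
  rw [hball x, hball x'] at this
  exact_mod_cast this

end Main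

lemma treeDist_proj_le_iff {X : Type*} {n : ℕ} (x y : Fin (n+1) → X) (σ : ℕ) :
    treeDist x y ≤ σ + 1 ↔ treeDist (x ∘ Fin.castSucc) (y ∘ Fin.castSucc) ≤ σ := by
  rw [treeDist_le_iff, treeDist_le_iff]
  constructor
  · intro h i hi
    have := h (Fin.castSucc i) (by simp [Fin.coe_castSucc]; omega)
    simpa using this
  · intro h i hi
    have hlt : (i : ℕ) < n := by omega
    have hcast : Fin.castSucc ⟨(i : ℕ), hlt⟩ = i := by
      apply Fin.ext; simp
    have := h ⟨(i : ℕ), hlt⟩ (by simp; omega)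
    simp only [Function.comp_apply, hcast] at this
    exact this

lemma treeDist_le_one_iff {X : Type*} {n : ℕ} (x y : Fin (n+1) → X) :
    treeDist x y ≤ 1 ↔ (x ∘ Fin.castSucc) = (y ∘ Fin.castSucc) := by
  have h := treeDist_proj_le_iff x y 0
  rw [treeDist_le_zero_iff] at h
  exact h

/-- Let `𝓛 = {L_1,…,L_k}` be a lumping of the Insect Markov chain on `X^{n+1}`
(depth `n + 1 ≥ 2`), and let `L i' ⊆ X^n` be obtained from `L i` by deleting the last letter.
Then the distinct sets among the `L i'` form a partition `𝓛'` of `X^n` (they cover `X^n` and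
any two of them are equal or disjoint), and `𝓛'` is a lumping of the Insect Markov chain
on `X^n`. -/
theorem stmt_14 {X : Type*} [Fintype X] {n k : ℕ}
    (hq : 2 ≤ Fintype.card X) (hn : 1 ≤ n)
    (L : Fin k → Finset (Fin (n + 1) → X))
    (hL_nonempty : ∀ s, (L s).Nonempty)
    (hL_part : ∀ x : Fin (n + 1) → X, ∃! s, x ∈ L s)
    (hlump : ∀ r s : Fin k, ∀ x ∈ L r, ∀ x' ∈ L r,
        ∑ y ∈ L s, insectP x y = ∑ y ∈ L s, insectP x' y) :
    -- the sets L i' cover X^n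
    (∀ w : Fin n → X, ∃ i : Fin k, w ∈ (L i).image (fun v => v ∘ Fin.castSucc))
    ∧
    -- any two of them are equal or disjoint
    (∀ i j : Fin k,
      (L i).image (fun v => v ∘ Fin.castSucc) = (L j).image (fun v => v ∘ Fin.castSucc)
      ∨ Disjoint ((L i).image (fun v => v ∘ Fin.castSucc))
          ((L j).image (fun v => v ∘ Fin.castSucc)))
    ∧
    -- the partition they form is a lumping of the Insect Markov chain on X^n
    (∀ i j : Fin k,
      ∀ w ∈ (L i).image (fun v => v ∘ Fin.castSucc),
      ∀ w' ∈ (L i).image (fun v => v ∘ Fin.castSucc),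
        ∑ u ∈ (L j).image (fun v => v ∘ Fin.castSucc), insectP w u
        = ∑ u ∈ (L j).image (fun v => v ∘ Fin.castSucc), insectP w' u) := by
  classical
  set π : (Fin (n+1) → X) → (Fin n → X) := fun v => v ∘ Fin.castSucc with hπ
  have hcard0 : 0 < Fintype.card X := lt_of_lt_of_le Nat.zero_lt_two hq
  have hNX : Nonempty X := Fintype.card_pos_iff.mp hcard0
  have KEY := fun {σ : ℕ} (hσ1 : 1 ≤ σ) (hσN : σ ≤ n+1) (r s : Fin k)
      {x x' : Fin (n+1) → X} (hx : x ∈ L r) (hx' : x' ∈ L r) =>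
    key_card L hq (by omega : 1 ≤ n+1) hL_nonempty hL_part hlump hσ1 hσN r s hx hx'
  -- fiber count equality
  have D1 : ∀ (r s : Fin k) (x x' : Fin (n+1) → X), x ∈ L r → x' ∈ L r →
      ((L s).filter (fun y => π y = π x)).card
        = ((L s).filter (fun y => π y = π x')).card := by
    intro r s x x' hx hx'
    have h := KEY (le_refl 1) (by omega) r s hx hx'
    have hfil : ∀ z : Fin (n+1) → X, (L s).filter (fun y => treeDist z y ≤ 1)
        = (L s).filter (fun y => π y = π z) := by
      intro z
      apply Finset.filter_congr
      intro y _
      rw [treeDist_le_one_iff]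
      constructor
      · intro hzy; rw [hπ]; exact hzy.symm
      · intro hzy; exact hzy.symm
    rw [hfil x, hfil x'] at h
    exact h
  -- ball count equality (downstairs radius t, upstairs σ = t+1)
  have D2 : ∀ (t : ℕ), t ≤ n → ∀ (r s : Fin k) (x x' : Fin (n+1) → X), x ∈ L r → x' ∈ L r →
      ((L s).filter (fun y => treeDist (π x) (π y) ≤ t)).card
        = ((L s).filter (fun y => treeDist (π x') (π y) ≤ t)).card := by
    intro t ht r s x x' hx hx'
    have h := KEY (by omega : 1 ≤ t+1) (by omega) r s hx hx'
    have hfil : ∀ z : Fin (n+1) → X, (L s).filter (fun y => treeDist z y ≤ t+1)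
        = (L s).filter (fun y => treeDist (π z) (π y) ≤ t) := by
      intro z
      apply Finset.filter_congr
      intro y _
      rw [treeDist_proj_le_iff]
    rw [hfil x, hfil x'] at h
    exact h
  refine ⟨?_, ?_, ?_⟩
  · -- cover
    intro w
    set x : Fin (n+1) → X := Fin.snoc w (Classical.arbitrary X) with hx
    have hproj : π x = w := by
      funext i
      rw [hπ, hx]
      simp [Fin.snoc_castSucc]
    obtain ⟨i, hi, -⟩ := hL_part x
    exact ⟨i, Finset.mem_image.mpr ⟨x, hi, hproj⟩⟩
  · -- equal or disjoint
    have SUB : ∀ i j : Fin k,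
        ¬ Disjoint ((L i).image π) ((L j).image π) →
        (L i).image π ⊆ (L j).image π := by
      intro i j hdis
      obtain ⟨w0, hw0i, hw0j⟩ := Finset.not_disjoint_iff.mp hdis
      intro w' hw'
      obtain ⟨x, hxL, hxw⟩ := Finset.mem_image.mp hw0i
      obtain ⟨z, hzL, hzw⟩ := Finset.mem_image.mp hw0j
      obtain ⟨x', hx'L, hx'w⟩ := Finset.mem_image.mp hw'
      have h := D1 i j x x' hxL hx'L
      have hpos : 0 < ((L j).filter (fun y => π y = π x)).card := by
        rw [Finset.card_pos]
        exact ⟨z, Finset.mem_filter.mpr ⟨hzL, by rw [hzw, hxw]⟩⟩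
      rw [h] at hpos
      obtain ⟨y, hy⟩ := Finset.card_pos.mp hpos
      rw [Finset.mem_filter] at hy
      exact Finset.mem_image.mpr ⟨y, hy.1, by rw [hy.2, hx'w]⟩
    intro i j
    by_cases hdis : Disjoint ((L i).image π) ((L j).image π)
    · exact Or.inr hdis
    · left
      apply Finset.Subset.antisymm (SUB i j hdis)
      apply SUB j i (fun hd => hdis hd.symm)
  · -- lumping downstairs
    intro i j w hw w' hw'
    obtain ⟨x, hxL, hxw⟩ := Finset.mem_image.mp hw
    obtain ⟨x', hx'L, hx'w⟩ := Finset.mem_image.mp hw'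
    -- constant fiber multiplicity on (L j).image π
    obtain ⟨z0, hz0⟩ := hL_nonempty j
    set c : ℕ := ((L j).filter (fun y => π y = π z0)).card with hc
    have hconst : ∀ u ∈ (L j).image π, ((L j).filter (fun y => π y = u)).card = c := by
      intro u hu
      obtain ⟨z, hzL, hzw⟩ := Finset.mem_image.mp hu
      have := D1 j j z z0 hzL hz0
      rw [hzw] at this
      exact this
    have hc1 : 1 ≤ c := by
      rw [hc]
      rw [Nat.succ_le_iff, Finset.card_pos]
      exact ⟨z0, Finset.mem_filter.mpr ⟨hz0, rfl⟩⟩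
    -- ball counts downstairs
    have hcount : ∀ (t : ℕ), t ≤ n → ∀ (v : Fin (n+1) → X), v ∈ L i →
        ((L j).filter (fun y => treeDist (π v) (π y) ≤ t)).card
          = c * (((L j).image π).filter (fun u => treeDist (π v) u ≤ t)).card := by
      intro t ht v hv
      rw [Finset.card_eq_sum_card_fiberwise
        (f := π) (t := ((L j).image π).filter (fun u => treeDist (π v) u ≤ t))
        (fun y hy => by
          rw [Finset.mem_coe, Finset.mem_filter] at hy
          rw [Finset.mem_coe, Finset.mem_filter]
          exact ⟨Finset.mem_image_of_mem π hy.1, hy.2⟩)]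
      rw [Finset.sum_congr rfl (fun u hu => ?_), Finset.sum_const, smul_eq_mul, mul_comm]
      rw [Finset.mem_filter] at hu
      have hfib : ((L j).filter (fun y => treeDist (π v) (π y) ≤ t)).filter
            (fun y => π y = u) = (L j).filter (fun y => π y = u) := by
        ext y
        simp only [Finset.mem_filter, and_assoc]
        constructor
        · rintro ⟨h1, _, h3⟩; exact ⟨h1, h3⟩
        · rintro ⟨h1, h2⟩
          refine ⟨h1, ?_, h2⟩
          rw [h2]
          exact hu.2
      rw [hfib, hconst u hu.1]
    have hballs : ∀ (t : ℕ), t ≤ n →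
        (((L j).image π).filter (fun u => treeDist w u ≤ t)).card
          = (((L j).image π).filter (fun u => treeDist w' u ≤ t)).card := by
      intro t ht
      have h1 := hcount t ht x hxL
      have h2 := hcount t ht x' hx'L
      have h3 := D2 t ht i j x x' hxL hx'L
      rw [h1, h2, hxw, hx'w] at h3
      exact Nat.eq_of_mul_eq_mul_left (by omega) h3
    -- expand downstairs insectP
    have hexp : ∀ wv : Fin n → X, ∑ u ∈ (L j).image π, insectP wv u
        = ∑ t ∈ Finset.Icc 1 n, cfn (Fintype.card X) n t
            * ((((L j).image π).filter (fun u => treeDist wv u ≤ t)).card : ℝ) := by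
      intro wv
      calc ∑ u ∈ (L j).image π, insectP wv u
          = ∑ u ∈ (L j).image π, ∑ t ∈ Finset.Icc 1 n,
              (if treeDist wv u ≤ t then cfn (Fintype.card X) n t else 0) := by
            exact Finset.sum_congr rfl (fun u _ => insectP_eq wv u)
        _ = ∑ t ∈ Finset.Icc 1 n, ∑ u ∈ (L j).image π,
              (if treeDist wv u ≤ t then cfn (Fintype.card X) n t else 0) :=
            Finset.sum_comm
        _ = ∑ t ∈ Finset.Icc 1 n, cfn (Fintype.card X) n t
              * ((((L j).image π).filter (fun u => treeDist wv u ≤ t)).card : ℝ) := by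
            apply Finset.sum_congr rfl
            intro t _
            rw [← Finset.sum_filter, Finset.sum_const, nsmul_eq_mul, mul_comm]
    rw [hexp w, hexp w']
    apply Finset.sum_congr rfl
    intro t htmem
    rw [Finset.mem_Icc] at htmem
    rw [hballs t htmem.2]
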